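/- Let a, b, c be positive real numbers with a > 1 and c^(1/b) · b / ln(a) ≥ e. If x > -b · W₋₁(-ln(a)/(c^(1/b)·b)) / ln(a), where W₋₁ is the lower real branch of the Lambert W function, then a^x / x^b > c. -/

import Mathlib

/-- The lower real branch `W₋₁` of the Lambert W function (the inverse of `w ↦ w * exp w`),
defined on `[-1/e, 0)` with values in `(-∞, -1]`; realized as the infimum of the solution set. -/
noncomputable def lambertWm1 (y : ℝ) : ℝ := sInf {w : ℝ | w * Real.exp w = y}

lemma exp_quad {u : ℝ} (hu : 0 ≤ u) : u ^ 2 / 4 ≤ Real.exp u := by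
  have h1 : u / 2 + 1 ≤ Real.exp (u / 2) := Real.add_one_le_exp _
  have h2 : Real.exp u = Real.exp (u / 2) * Real.exp (u / 2) := by
    rw [← Real.exp_add]; ring_nf
  nlinarith [Real.exp_pos (u / 2)]

lemma lambertWm1_spec {t : ℝ} (ht0 : 0 < t) (ht1 : t ≤ Real.exp (-1)) :
    lambertWm1 (-t) * Real.exp (lambertWm1 (-t)) = -t ∧ lambertWm1 (-t) ≤ -1 := by
  have hcont : Continuous (fun w : ℝ => w * Real.exp w) :=
    continuous_id.mul Real.continuous_exp
  have hclosed : IsClosed {w : ℝ | w * Real.exp w = -t} :=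
    isClosed_eq hcont continuous_const
  have hbdd : BddBelow {w : ℝ | w * Real.exp w = -t} := by
    refine ⟨-4 / t, fun w hw => ?_⟩
    by_contra h
    push_neg at h
    set u : ℝ := -w with hu
    have hu4 : 4 / t < u := by
      have : w < -(4 / t) := by rw [neg_div] at h; exact h
      linarith
    have hu0 : 0 < u := lt_trans (by positivity) hu4
    have hE : Real.exp (-u) * Real.exp u = 1 := by
      rw [← Real.exp_add]; simp
    have hmem : w * Real.exp w = -t := hw
    have heq : u = t * Real.exp u := by
      have h1 : u * Real.exp (-u) = t := by
        have h2 : -u = w := by rw [hu]; ring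
        rw [h2, hu]; linarith [hmem]
      nlinarith [mul_le_mul_of_nonneg_right h1.ge (Real.exp_pos u).le,
        mul_le_mul_of_nonneg_right h1.le (Real.exp_pos u).le, hE]
    have hq := exp_quad hu0.le
    have htu : 4 < u * t := (div_lt_iff₀ ht0).mp hu4
    have hA : t * (u ^ 2 / 4) ≤ t * Real.exp u :=
      mul_le_mul_of_nonneg_left hq ht0.le
    have hB : 0 < (t * u - 4) * u := mul_pos (by linarith : (0:ℝ) < t * u - 4) hu0
    have hC : t * (u ^ 2 / 4) ≤ u := hA.trans_eq heq.symm
    clear_value u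
    nlinarith [hB, hC]
  set M : ℝ := max (4 / t) 1 with hM
  have hM1 : 1 ≤ M := le_max_right _ _
  have hMt : 4 / t ≤ M := le_max_left _ _
  have hM0 : 0 < M := lt_of_lt_of_le one_pos hM1
  have h4 : 4 ≤ M * t := (div_le_iff₀ ht0).mp hMt
  have hq := exp_quad hM0.le
  have hMle : M ≤ t * Real.exp M := by
    nlinarith [mul_le_mul_of_nonneg_left hq ht0.le,
      mul_nonneg (by linarith : (0:ℝ) ≤ M * t - 4) hM0.le]
  have hE : Real.exp (-M) * Real.exp M = 1 := by
    rw [← Real.exp_add]; simp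
  have hfM : -t ≤ (-M) * Real.exp (-M) := by
    nlinarith [mul_le_mul_of_nonneg_left hMle (Real.exp_pos (-M)).le, hE,
      Real.exp_pos (-M)]
  have hivt : -t ∈ (fun w : ℝ => w * Real.exp w) '' Set.Icc (-M) (-1) := by
    apply intermediate_value_Icc' (by linarith : -M ≤ -1) hcont.continuousOn
    constructor
    · show (-1 : ℝ) * Real.exp (-1) ≤ -t
      nlinarith [ht1]
    · exact hfM
  obtain ⟨w₁, hw₁mem, hw₁⟩ := hivt
  have hne : Set.Nonempty {w : ℝ | w * Real.exp w = -t} := ⟨w₁, hw₁⟩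
  have hmem := hclosed.csInf_mem hne hbdd
  have hle : sInf {w : ℝ | w * Real.exp w = -t} ≤ -1 :=
    le_trans (csInf_le hbdd hw₁) hw₁mem.2
  exact ⟨hmem, hle⟩

set_option maxHeartbeats 800000 in
/-- If `a, b, c > 0`, `a > 1`, and `c^(1/b) * b / ln a ≥ e`, then any
`x > -b * W₋₁(-ln a / (c^(1/b) * b)) / ln a` satisfies `a^x / x^b > c`. -/
theorem stmt0 (a b c x : ℝ) (ha0 : 0 < a) (hb : 0 < b) (hc : 0 < c) (ha : 1 < a)
    (hcond : Real.exp 1 ≤ c ^ ((1 : ℝ) / b) * b / Real.log a)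
    (hx : x > -b * lambertWm1 (-Real.log a / (c ^ ((1 : ℝ) / b) * b)) / Real.log a) :
    a ^ x / x ^ b > c := by
  set L : ℝ := Real.log a with hLdef
  have hL : 0 < L := Real.log_pos ha
  set k : ℝ := c ^ ((1 : ℝ) / b) with hkdef
  have hk : 0 < k := Real.rpow_pos_of_pos hc _
  set t : ℝ := L / (k * b) with htdef
  have ht0 : 0 < t := by positivity
  have ht1 : t ≤ Real.exp (-1) := by
    have h1 : Real.exp 1 * L ≤ k * b := (le_div_iff₀ hL).mp hcond
    rw [htdef, Real.exp_neg, div_le_iff₀ (by positivity : (0:ℝ) < k * b),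
      inv_mul_eq_div, le_div_iff₀ (Real.exp_pos 1)]
    linarith [h1]
  have harg : -Real.log a / (c ^ ((1 : ℝ) / b) * b) = -t := by
    rw [htdef, neg_div, hLdef, hkdef]
  rw [harg] at hx
  obtain ⟨hweq, hwle⟩ := lambertWm1_spec ht0 ht1
  set w : ℝ := lambertWm1 (-t) with hwdef
  set u : ℝ := -w with hudef
  have hu1 : 1 ≤ u := by simp [hudef]; linarith
  have hu0 : 0 < u := lt_of_lt_of_le one_pos hu1
  -- u = t * exp u
  have hE : Real.exp (-u) * Real.exp u = 1 := by rw [← Real.exp_add]; simp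
  have hueq : u = t * Real.exp u := by
    have h1 : u * Real.exp (-u) = t := by
      have : w = -u := by rw [hudef]; ring
      rw [this] at hweq; nlinarith [hweq]
    nlinarith [mul_le_mul_of_nonneg_right h1.ge (Real.exp_pos u).le,
      mul_le_mul_of_nonneg_right h1.le (Real.exp_pos u).le, hE]
  have hlogu : Real.log u = Real.log t + u := by
    conv_lhs => rw [hueq]
    rw [Real.log_mul (ne_of_gt ht0) (ne_of_gt (Real.exp_pos u)), Real.log_exp]
  have hlogt : Real.log t = Real.log L - Real.log k - Real.log b := by
    rw [htdef, Real.log_div (ne_of_gt hL) (by positivity),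
      Real.log_mul (ne_of_gt hk) (ne_of_gt hb)]; ring
  set x₀ : ℝ := b * u / L with hx0def
  have hx0pos : 0 < x₀ := by positivity
  have hxgt : x₀ < x := by
    have : -b * w / L = x₀ := by rw [hx0def, hudef]; ring
    linarith [hx]
  have hxpos : 0 < x := lt_trans hx0pos hxgt
  have hlogx0 : Real.log x₀ = u - Real.log k := by
    rw [hx0def, Real.log_div (by positivity) (ne_of_gt hL),
      Real.log_mul (ne_of_gt hb) (ne_of_gt hu0), hlogu, hlogt]; ring
  have hlogk : b * Real.log k = Real.log c := by
    rw [hkdef, Real.log_rpow hc]; field_simp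
  -- key inequality
  have hratio : Real.log (x / x₀) < x / x₀ - 1 :=
    Real.log_lt_sub_one_of_pos (by positivity) (by
      intro h
      rw [div_eq_one_iff_eq (ne_of_gt hx0pos)] at h
      linarith)
  have hlogdiv : Real.log (x / x₀) = Real.log x - Real.log x₀ :=
    Real.log_div (ne_of_gt hxpos) (ne_of_gt hx0pos)
  have hkey : Real.log c < L * x - b * Real.log x := by
    rw [← hlogk]
    have hxx0 : x / x₀ = x * L / (b * u) := by rw [hx0def]; field_simp
    have h1 : Real.log x < u - Real.log k + x * L / (b * u) - 1 := by
      have := hratio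
      rw [hlogdiv, hlogx0, hxx0] at this
      linarith
    have h2 : b * Real.log x < b * (u - Real.log k + x * L / (b * u) - 1) :=
      (mul_lt_mul_iff_right₀ hb).mpr h1
    have h3 : b * (x * L / (b * u)) = x * L / u := by field_simp
    -- need: b * log k ≤ L * x - b * (u - log k + x*L/(b*u) - 1)
    -- i.e. 0 ≤ L*x - b*u - x*L/u + b  ⟺ (u-1)*(L*x - b*u) ≥ 0
    have h4 : b * u ≤ L * x := by
      have : b * u / L < x := hxgt
      rw [div_lt_iff₀ hL] at this; linarith
    have h5 : 0 ≤ (u - 1) * (L * x - b * u) :=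
      mul_nonneg (by linarith) (by linarith)
    have h6 : x * L / u ≤ L * x - b * u + b := by
      rw [div_le_iff₀ hu0]
      nlinarith [h5]
    nlinarith [h2, h3, h6]
  -- conclude
  have h7 : a ^ x = Real.exp (L * x) := by
    rw [Real.rpow_def_of_pos ha0, hLdef]
  have h8 : x ^ b = Real.exp (b * Real.log x) := by
    rw [Real.rpow_def_of_pos hxpos]; ring_nf
  rw [h7, h8, ← Real.exp_sub, gt_iff_lt, ← Real.exp_log hc]
  exact Real.exp_lt_exp.mpr hkey
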